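/- Let g: [0,1/4] → ℝ be measurable. There exists a probability density f on [0,1] with f(q₊(r)) − f(q₋(r)) = g(r) for almost every r ∈ [0,1/4] if and only if ∫₀^{1/4} |g(r)| (1−4r)^{−1/2} dr ≤ 1. Moreover, if equality holds, the realizing density is unique up to a.e. equality, with f(q₊(r)) = g⁺(r) and f(q₋(r)) = g⁻(r) almost everywhere. -/

import Mathlib

open MeasureTheory Set
open scoped ENNReal NNReal

/-- Upper branch of `q(1-q) = r`. -/
noncomputable def qPlus (r : ℝ) : ℝ := (1 + Real.sqrt (1 - 4*r)) / 2

/-- Lower branch of `q(1-q) = r`. -/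
noncomputable def qMinus (r : ℝ) : ℝ := (1 - Real.sqrt (1 - 4*r)) / 2

/-- `f` is a probability density on `[0,1]` realizing the branch asymmetry `g`. -/
def Realizes (f g : ℝ → ℝ) : Prop :=
  Measurable f ∧ (∀ q ∈ Set.Icc (0:ℝ) 1, 0 ≤ f q) ∧
    (∫ q in Set.Icc (0:ℝ) 1, f q = 1) ∧
    (∀ᵐ r ∂(volume.restrict (Set.Icc (0:ℝ) (1/4))), f (qPlus r) - f (qMinus r) = g r)

lemma qPlus_mul {r : ℝ} (hr : r ∈ Icc (0:ℝ) (1/4)) : qPlus r * (1 - qPlus r) = r := by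
  have h : (0:ℝ) ≤ 1 - 4*r := by linarith [hr.2]
  have hs := Real.sq_sqrt h
  unfold qPlus; nlinarith [hs]

lemma qMinus_mul {r : ℝ} (hr : r ∈ Icc (0:ℝ) (1/4)) : qMinus r * (1 - qMinus r) = r := by
  have h : (0:ℝ) ≤ 1 - 4*r := by linarith [hr.2]
  have hs := Real.sq_sqrt h
  unfold qMinus; nlinarith [hs]

lemma sqrt_bounds {r : ℝ} (hr : r ∈ Icc (0:ℝ) (1/4)) :
    Real.sqrt (1 - 4*r) ≤ 1 ∧ 0 ≤ Real.sqrt (1 - 4*r) := by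
  refine ⟨?_, Real.sqrt_nonneg _⟩
  exact Real.sqrt_le_one.2 (by linarith [hr.1])

lemma sqrt_pos' {r : ℝ} (hr : r ∈ Ico (0:ℝ) (1/4)) : 0 < Real.sqrt (1 - 4*r) :=
  Real.sqrt_pos.2 (by linarith [hr.2])

lemma qPlus_mem {r : ℝ} (hr : r ∈ Icc (0:ℝ) (1/4)) : qPlus r ∈ Icc (0:ℝ) 1 := by
  obtain ⟨h1, h0⟩ := sqrt_bounds hr
  constructor <;> unfold qPlus <;> linarith

lemma qMinus_mem {r : ℝ} (hr : r ∈ Icc (0:ℝ) (1/4)) : qMinus r ∈ Icc (0:ℝ) 1 := by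
  obtain ⟨h1, h0⟩ := sqrt_bounds hr
  constructor <;> unfold qMinus <;> linarith

lemma qPlus_gt {r : ℝ} (hr : r ∈ Ico (0:ℝ) (1/4)) : 1/2 < qPlus r := by
  have := sqrt_pos' hr; unfold qPlus; linarith

lemma qMinus_lt {r : ℝ} (hr : r ∈ Ico (0:ℝ) (1/4)) : qMinus r < 1/2 := by
  have := sqrt_pos' hr; unfold qMinus; linarith

lemma image_qPlus : qPlus '' Ico (0:ℝ) (1/4) = Ioc (1/2 : ℝ) 1 := by
  ext q
  constructor
  · rintro ⟨r, hr, rfl⟩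
    exact ⟨qPlus_gt hr, (qPlus_mem (Ico_subset_Icc_self hr)).2⟩
  · rintro ⟨hq1, hq2⟩
    refine ⟨q * (1 - q), ⟨by nlinarith, by nlinarith⟩, ?_⟩
    have h : 1 - 4*(q*(1-q)) = (2*q-1)^2 := by ring
    unfold qPlus
    rw [h, Real.sqrt_sq (by linarith)]; ring

lemma image_qMinus : qMinus '' Ico (0:ℝ) (1/4) = Ico (0:ℝ) (1/2) := by
  ext q
  constructor
  · rintro ⟨r, hr, rfl⟩
    exact ⟨(qMinus_mem (Ico_subset_Icc_self hr)).1, qMinus_lt hr⟩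
  · rintro ⟨hq1, hq2⟩
    refine ⟨q * (1 - q), ⟨by nlinarith, by nlinarith⟩, ?_⟩
    have h : 1 - 4*(q*(1-q)) = (1-2*q)^2 := by ring
    unfold qMinus
    rw [h, Real.sqrt_sq (by linarith)]; ring

lemma injOn_qPlus : InjOn qPlus (Ico (0:ℝ) (1/4)) := by
  intro a ha b hb h
  rw [← qPlus_mul (Ico_subset_Icc_self ha), h, qPlus_mul (Ico_subset_Icc_self hb)]

lemma injOn_qMinus : InjOn qMinus (Ico (0:ℝ) (1/4)) := by
  intro a ha b hb h
  rw [← qMinus_mul (Ico_subset_Icc_self ha), h, qMinus_mul (Ico_subset_Icc_self hb)]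

lemma hasDeriv_qPlus {x : ℝ} (hx : x ∈ Ico (0:ℝ) (1/4)) :
    HasDerivAt qPlus (-(Real.sqrt (1 - 4*x))⁻¹) x := by
  have hpos : (0:ℝ) < 1 - 4*x := by linarith [hx.2]
  have h1 : HasDerivAt (fun r : ℝ => 1 - 4*r) (-4) x := by
    simpa using ((hasDerivAt_id x).const_mul (4:ℝ)).const_sub 1
  have h2 := (Real.hasDerivAt_sqrt (ne_of_gt hpos)).comp x h1
  have h3 := (h2.const_add 1).div_const 2
  have hs : Real.sqrt (1 - 4*x) ≠ 0 := ne_of_gt (Real.sqrt_pos.2 hpos)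
  refine h3.congr_deriv ?_
  field_simp
  ring

lemma hasDeriv_qMinus {x : ℝ} (hx : x ∈ Ico (0:ℝ) (1/4)) :
    HasDerivAt qMinus ((Real.sqrt (1 - 4*x))⁻¹) x := by
  have hpos : (0:ℝ) < 1 - 4*x := by linarith [hx.2]
  have h1 : HasDerivAt (fun r : ℝ => 1 - 4*r) (-4) x := by
    simpa using ((hasDerivAt_id x).const_mul (4:ℝ)).const_sub 1
  have h2 := (Real.hasDerivAt_sqrt (ne_of_gt hpos)).comp x h1
  have h3 := (h2.const_sub 1).div_const 2
  have hs : Real.sqrt (1 - 4*x) ≠ 0 := ne_of_gt (Real.sqrt_pos.2 hpos)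
  refine h3.congr_deriv ?_
  field_simp
  ring

lemma lintegral_image_deriv {s : Set ℝ} {φ φ' : ℝ → ℝ}
    (hs : MeasurableSet s) (hφ' : ∀ x ∈ s, HasDerivWithinAt φ (φ' x) s x)
    (hφ : InjOn φ s) (F : ℝ → ℝ≥0∞) :
    ∫⁻ x in φ '' s, F x = ∫⁻ x in s, ENNReal.ofReal |φ' x| * F (φ x) := by
  simpa only [ContinuousLinearMap.det_toSpanSingleton] using
    lintegral_image_eq_lintegral_abs_det_fderiv_mul volume hs
      (fun x hx => (hφ' x hx).hasFDerivWithinAt) hφ F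

/-- Master change-of-variables lemma. -/
lemma lemmaA (F : ℝ → ℝ≥0∞) (hF : Measurable F) :
    ∫⁻ q in Icc (0:ℝ) 1, F q
      = ∫⁻ r in Icc (0:ℝ) (1/4),
          ENNReal.ofReal (Real.sqrt (1 - 4*r))⁻¹ * (F (qPlus r) + F (qMinus r)) := by
  have hsetae : (Icc (0:ℝ) 1 : Set ℝ) =ᵐ[volume] ((Ico (0:ℝ) (1/2) ∪ Ioc (1/2:ℝ) 1 : Set ℝ)) := by
    have h : (Ico (0:ℝ) (1/2) ∪ Ioc (1/2:ℝ) 1 : Set ℝ) = Icc (0:ℝ) 1 \ {1/2} := by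
      ext x
      simp only [mem_union, mem_Ico, mem_Ioc, mem_diff, mem_Icc, mem_singleton_iff]
      constructor
      · rintro (⟨h1, h2⟩ | ⟨h1, h2⟩)
        · exact ⟨⟨h1, by linarith⟩, by linarith⟩
        · exact ⟨⟨by linarith, h2⟩, by linarith⟩
      · rintro ⟨⟨h1, h2⟩, h3⟩
        rcases lt_or_gt_of_ne h3 with h | h
        · exact Or.inl ⟨h1, h⟩
        · exact Or.inr ⟨h, h2⟩
    rw [h]
    exact (diff_ae_eq_self.2 (measure_mono_null inter_subset_right (by simp))).symm
  have hsplit : ∫⁻ q in Icc (0:ℝ) 1, F q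
      = (∫⁻ q in Ico (0:ℝ) (1/2), F q) + ∫⁻ q in Ioc (1/2:ℝ) 1, F q := by
    have hdisj : Disjoint (Ico (0:ℝ) (1/2)) (Ioc (1/2:ℝ) 1) := by
      rw [Set.disjoint_left]
      rintro x ⟨_, h2⟩ ⟨h3, _⟩
      linarith
    rw [setLIntegral_congr hsetae, lintegral_union measurableSet_Ioc hdisj]
  have hP : ∫⁻ q in Ioc (1/2:ℝ) 1, F q
      = ∫⁻ r in Ico (0:ℝ) (1/4), ENNReal.ofReal (Real.sqrt (1 - 4*r))⁻¹ * F (qPlus r) := by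
    rw [← image_qPlus, lintegral_image_deriv measurableSet_Ico
      (fun x hx => (hasDeriv_qPlus hx).hasDerivWithinAt) injOn_qPlus F]
    refine setLIntegral_congr_fun measurableSet_Ico (fun x hx => ?_)
    rw [abs_neg, abs_of_nonneg (inv_nonneg.2 (Real.sqrt_nonneg _))]
  have hM : ∫⁻ q in Ico (0:ℝ) (1/2), F q
      = ∫⁻ r in Ico (0:ℝ) (1/4), ENNReal.ofReal (Real.sqrt (1 - 4*r))⁻¹ * F (qMinus r) := by
    rw [← image_qMinus, lintegral_image_deriv measurableSet_Ico
      (fun x hx => (hasDeriv_qMinus hx).hasDerivWithinAt) injOn_qMinus F]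
    refine setLIntegral_congr_fun measurableSet_Ico (fun x hx => ?_)
    rw [abs_of_nonneg (inv_nonneg.2 (Real.sqrt_nonneg _))]
  rw [hsplit, hM, hP]
  rw [setLIntegral_congr (Ico_ae_eq_Icc (μ := volume) (a := (0:ℝ)) (b := 1/4)).symm]
  have hmeas : Measurable fun r : ℝ => ENNReal.ofReal (Real.sqrt (1 - 4*r))⁻¹ * F (qMinus r) := by
    apply Measurable.mul
    · exact (measurable_const.sub (measurable_id.const_mul 4)).sqrt.inv.ennreal_ofReal
    · exact hF.comp (by unfold qMinus; fun_prop)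
  rw [← lintegral_add_left hmeas]
  exact lintegral_congr fun x => by rw [mul_add, add_comm]

lemma measurable_w : Measurable (fun r : ℝ => (Real.sqrt (1 - 4*r))⁻¹) :=
  (measurable_const.sub (measurable_id.const_mul 4)).sqrt.inv

lemma measurable_qPlus : Measurable qPlus := by unfold qPlus; fun_prop

lemma measurable_qMinus : Measurable qMinus := by unfold qMinus; fun_prop

lemma lintegral_w :
    ∫⁻ r in Icc (0:ℝ) (1/4), ENNReal.ofReal (Real.sqrt (1 - 4*r))⁻¹ = 1/2 := by
  have h := lemmaA (fun _ => 1) measurable_const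
  rw [setLIntegral_one, Real.volume_Icc] at h
  norm_num at h
  have h2 : ∫⁻ r in Icc (0:ℝ) (1/4),
      ENNReal.ofReal (Real.sqrt (1 - 4*r))⁻¹ * 2
      = (∫⁻ r in Icc (0:ℝ) (1/4), ENNReal.ofReal (Real.sqrt (1 - 4*r))⁻¹) * 2 :=
    lintegral_mul_const _ measurable_w.ennreal_ofReal
  rw [h2] at h
  refine (ENNReal.eq_div_iff two_ne_zero ENNReal.ofNat_ne_top).2 ?_
  rw [mul_comm]
  exact h.symm

lemma realizes_eq_one {f g : ℝ → ℝ} (hf : Realizes f g) :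
    ∫⁻ r in Icc (0:ℝ) (1/4), ENNReal.ofReal (Real.sqrt (1-4*r))⁻¹ *
        (ENNReal.ofReal (f (qPlus r)) + ENNReal.ofReal (f (qMinus r))) = 1 := by
  obtain ⟨hfm, hf0, hf1, _⟩ := hf
  have hInt : IntegrableOn f (Icc (0:ℝ) 1) := by
    by_contra h
    rw [integral_undef h] at hf1; norm_num at hf1
  have hnn : 0 ≤ᵐ[volume.restrict (Icc (0:ℝ) 1)] f :=
    ae_restrict_of_forall_mem measurableSet_Icc hf0
  have hL : ∫⁻ q in Icc (0:ℝ) 1, ENNReal.ofReal (f q) = 1 := by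
    rw [← ofReal_integral_eq_lintegral_ofReal hInt hnn, hf1, ENNReal.ofReal_one]
  rw [← lemmaA _ hfm.ennreal_ofReal]
  exact hL

lemma realizes_ae_le {f g : ℝ → ℝ} (hf : Realizes f g) :
    (fun r => ENNReal.ofReal (|g r| * (Real.sqrt (1-4*r))⁻¹))
      ≤ᵐ[volume.restrict (Icc (0:ℝ) (1/4))]
    fun r => ENNReal.ofReal (Real.sqrt (1-4*r))⁻¹ *
        (ENNReal.ofReal (f (qPlus r)) + ENNReal.ofReal (f (qMinus r))) := by
  obtain ⟨hfm, hf0, hf1, hae⟩ := hf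
  filter_upwards [hae, ae_restrict_mem measurableSet_Icc] with r hgr hr
  have hw : (0:ℝ) ≤ (Real.sqrt (1-4*r))⁻¹ := inv_nonneg.2 (Real.sqrt_nonneg _)
  have hp := hf0 _ (qPlus_mem hr)
  have hm2 := hf0 _ (qMinus_mem hr)
  rw [← ENNReal.ofReal_add hp hm2, ← ENNReal.ofReal_mul hw]
  apply ENNReal.ofReal_le_ofReal
  have habs : |f (qPlus r) - f (qMinus r)| ≤ f (qPlus r) + f (qMinus r) := by
    rcases abs_cases (f (qPlus r) - f (qMinus r)) with ⟨h, _⟩ | ⟨h, _⟩ <;> linarith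
  rw [← hgr, mul_comm]
  exact mul_le_mul_of_nonneg_left habs hw

lemma ae_Ico : ∀ᵐ r ∂(volume.restrict (Icc (0:ℝ) (1/4))), r ∈ Ico (0:ℝ) (1/4) := by
  rw [← Measure.restrict_congr_set Ico_ae_eq_Icc]
  exact ae_restrict_mem measurableSet_Ico

lemma exists_realizes {g : ℝ → ℝ} (hg : Measurable g)
    (hI : ∫⁻ r in Icc (0:ℝ) (1/4),
        ENNReal.ofReal (|g r| * (Real.sqrt (1 - 4*r))⁻¹) ≤ 1) :
    ∃ f : ℝ → ℝ, Realizes f g := by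
  set I := ∫⁻ r in Icc (0:ℝ) (1/4),
      ENNReal.ofReal (|g r| * (Real.sqrt (1 - 4*r))⁻¹) with hIdef
  have hIne : I ≠ ⊤ := ne_top_of_le_ne_top ENNReal.one_ne_top hI
  set c : ℝ := 1 - I.toReal with hcdef
  have hItr : I.toReal ≤ 1 := by
    have := ENNReal.toReal_mono ENNReal.one_ne_top hI
    simpa using this
  have hc : 0 ≤ c := by simp [hcdef]; linarith
  set f : ℝ → ℝ := fun q =>
    (if 1/2 ≤ q then max (g (q*(1-q))) 0 else max (-g (q*(1-q))) 0) + c with hfdef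
  have hgq : Measurable fun q : ℝ => g (q*(1-q)) :=
    hg.comp (measurable_id.mul (measurable_const.sub measurable_id))
  have hfm : Measurable f := by
    apply Measurable.add _ measurable_const
    exact Measurable.ite (measurableSet_le measurable_const measurable_id)
      (hgq.max measurable_const) (hgq.neg.max measurable_const)
  have hf0 : ∀ q ∈ Icc (0:ℝ) 1, 0 ≤ f q := by
    intro q _
    have : (0:ℝ) ≤ if 1/2 ≤ q then max (g (q*(1-q))) 0 else max (-g (q*(1-q))) 0 := by
      split <;> exact le_max_right _ _
    simp only [hfdef]; linarith
  have hbranch : ∀ r ∈ Ico (0:ℝ) (1/4),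
      f (qPlus r) = max (g r) 0 + c ∧ f (qMinus r) = max (-g r) 0 + c := by
    intro r hr
    constructor
    · have h1 : (1:ℝ)/2 ≤ qPlus r := le_of_lt (qPlus_gt hr)
      simp only [hfdef, if_pos h1, qPlus_mul (Ico_subset_Icc_self hr)]
    · have h1 : ¬ ((1:ℝ)/2 ≤ qMinus r) := not_le.2 (qMinus_lt hr)
      simp only [hfdef, if_neg h1, qMinus_mul (Ico_subset_Icc_self hr)]
  have haeIco := ae_Ico
  have hae : ∀ᵐ r ∂(volume.restrict (Icc (0:ℝ) (1/4))),
      f (qPlus r) - f (qMinus r) = g r := by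
    filter_upwards [haeIco] with r hr
    obtain ⟨e1, e2⟩ := hbranch r hr
    rw [e1, e2]
    have := max_zero_sub_max_neg_zero_eq_self (g r)
    linarith
  -- lintegral computation
  have key : ∫⁻ q in Icc (0:ℝ) 1, ENNReal.ofReal (f q) = 1 := by
    rw [lemmaA _ hfm.ennreal_ofReal]
    have hcongr : (fun r => ENNReal.ofReal (Real.sqrt (1-4*r))⁻¹ *
          (ENNReal.ofReal (f (qPlus r)) + ENNReal.ofReal (f (qMinus r))))
        =ᵐ[volume.restrict (Icc (0:ℝ) (1/4))]
        (fun r => ENNReal.ofReal (|g r| * (Real.sqrt (1-4*r))⁻¹)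
          + ENNReal.ofReal (2*c) * ENNReal.ofReal (Real.sqrt (1-4*r))⁻¹) := by
      filter_upwards [haeIco] with r hr
      obtain ⟨e1, e2⟩ := hbranch r hr
      have hw : (0:ℝ) ≤ (Real.sqrt (1-4*r))⁻¹ := inv_nonneg.2 (Real.sqrt_nonneg _)
      have hm1 : (0:ℝ) ≤ max (g r) 0 + c := by positivity
      have hm2 : (0:ℝ) ≤ max (-g r) 0 + c := by positivity
      rw [e1, e2, ← ENNReal.ofReal_add hm1 hm2, ← ENNReal.ofReal_mul hw,
        ← ENNReal.ofReal_mul (by linarith : (0:ℝ) ≤ 2*c),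
        ← ENNReal.ofReal_add (by positivity) (mul_nonneg (by linarith) hw)]
      congr 1
      have habs : max (g r) 0 + max (-g r) 0 = |g r| := by
        rcases le_total 0 (g r) with h | h
        · rw [max_eq_left h, max_eq_right (by linarith), abs_of_nonneg h]; ring
        · rw [max_eq_right h, max_eq_left (by linarith), abs_of_nonpos h]; ring
      have : max (g r) 0 + c + (max (-g r) 0 + c) = |g r| + 2*c := by
        rw [← habs]; ring
      rw [mul_comm, this]; ring
    rw [lintegral_congr_ae hcongr,
      lintegral_add_left (f := fun r => ENNReal.ofReal (|g r| * (Real.sqrt (1-4*r))⁻¹))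
        ((hg.abs.mul measurable_w).ennreal_ofReal),
      lintegral_const_mul _ measurable_w.ennreal_ofReal, lintegral_w, ← hIdef]
    have h2c : ENNReal.ofReal (2*c) * (1/2 : ℝ≥0∞) = ENNReal.ofReal c := by
      rw [ENNReal.ofReal_mul (by norm_num : (0:ℝ) ≤ 2)]
      rw [show ENNReal.ofReal (2:ℝ) = 2 by simp]
      rw [one_div, mul_comm 2 _, mul_assoc, ENNReal.mul_inv_cancel two_ne_zero ENNReal.ofNat_ne_top,
        mul_one]
    rw [h2c, ← ENNReal.ofReal_toReal hIne, ← ENNReal.ofReal_add ENNReal.toReal_nonneg hc]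
    rw [show I.toReal + c = 1 by simp [hcdef]]
    exact ENNReal.ofReal_one
  have hnn : 0 ≤ᵐ[volume.restrict (Icc (0:ℝ) 1)] f :=
    ae_restrict_of_forall_mem measurableSet_Icc hf0
  have hint : ∫ q in Icc (0:ℝ) 1, f q = 1 := by
    rw [integral_eq_lintegral_of_nonneg_ae hnn hfm.aestronglyMeasurable, key]
    simp
  exact ⟨f, hfm, hf0, hint, hae⟩

lemma sat_branch {f g : ℝ → ℝ} (hg : Measurable g)
    (hI : ∫⁻ r in Icc (0:ℝ) (1/4),
        ENNReal.ofReal (|g r| * (Real.sqrt (1 - 4*r))⁻¹) = 1)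
    (hf : Realizes f g) :
    ∀ᵐ r ∂(volume.restrict (Icc (0:ℝ) (1/4))),
      f (qPlus r) = max (g r) 0 ∧ f (qMinus r) = max (-g r) 0 := by
  have h1 := realizes_eq_one hf
  have hle := realizes_ae_le hf
  have hmR : AEMeasurable (fun r => ENNReal.ofReal (Real.sqrt (1-4*r))⁻¹ *
      (ENNReal.ofReal (f (qPlus r)) + ENNReal.ofReal (f (qMinus r))))
      (volume.restrict (Icc (0:ℝ) (1/4))) := by
    apply Measurable.aemeasurable
    exact measurable_w.ennreal_ofReal.mul
      (((hf.1.comp measurable_qPlus).ennreal_ofReal).add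
        ((hf.1.comp measurable_qMinus).ennreal_ofReal))
  have heq := ae_eq_of_ae_le_of_lintegral_le hle (by rw [hI]; exact ENNReal.one_ne_top)
    hmR (by rw [h1, hI])
  filter_upwards [heq, hf.2.2.2, ae_restrict_mem measurableSet_Icc, ae_Ico]
    with r hr hgr hrIcc hrIco
  have hwpos : (0:ℝ) < (Real.sqrt (1-4*r))⁻¹ := inv_pos.2 (sqrt_pos' hrIco)
  have hp := hf.2.1 _ (qPlus_mem hrIcc)
  have hm2 := hf.2.1 _ (qMinus_mem hrIcc)
  have hw : (0:ℝ) ≤ (Real.sqrt (1-4*r))⁻¹ := le_of_lt hwpos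
  rw [← ENNReal.ofReal_add hp hm2, ← ENNReal.ofReal_mul hw] at hr
  have hreal : |g r| * (Real.sqrt (1-4*r))⁻¹
      = (Real.sqrt (1-4*r))⁻¹ * (f (qPlus r) + f (qMinus r)) :=
    (ENNReal.ofReal_eq_ofReal_iff (by positivity)
      (mul_nonneg hw (by linarith))).1 hr
  have habs : |g r| = f (qPlus r) + f (qMinus r) := by
    have h2 : (Real.sqrt (1-4*r))⁻¹ * |g r|
        = (Real.sqrt (1-4*r))⁻¹ * (f (qPlus r) + f (qMinus r)) := by linarith [hreal]
    exact mul_left_cancel₀ (ne_of_gt hwpos) h2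
  rcases le_total 0 (g r) with h | h
  · rw [abs_of_nonneg h] at habs
    constructor
    · rw [max_eq_left h]; linarith
    · rw [max_eq_right (by linarith : -g r ≤ 0)]; linarith
  · rw [abs_of_nonpos h] at habs
    constructor
    · rw [max_eq_right h]; linarith
    · rw [max_eq_left (by linarith : (0:ℝ) ≤ -g r)]; linarith

/-- Branch-asymmetry realizability: a measurable `g` on `[0,1/4]` is the branch
asymmetry of some probability density on `[0,1]` iff `∫ |g|(1−4r)^{−1/2} ≤ 1`; in the
saturated case the realizing density is the positive/negative part configuration,
uniquely up to a.e. equality. -/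
theorem stmt15 (g : ℝ → ℝ) (hg : Measurable g) :
    ((∃ f : ℝ → ℝ, Realizes f g) ↔
      ∫⁻ r in Set.Icc (0:ℝ) (1/4),
        ENNReal.ofReal (|g r| * (Real.sqrt (1 - 4*r))⁻¹) ≤ 1) ∧
    ((∫⁻ r in Set.Icc (0:ℝ) (1/4),
        ENNReal.ofReal (|g r| * (Real.sqrt (1 - 4*r))⁻¹) = 1) →
      ∀ f : ℝ → ℝ, Realizes f g →
        (∀ᵐ r ∂(volume.restrict (Set.Icc (0:ℝ) (1/4))),
          f (qPlus r) = max (g r) 0 ∧ f (qMinus r) = max (-g r) 0) ∧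
        ∀ f' : ℝ → ℝ, Realizes f' g →
          (∀ᵐ q ∂(volume.restrict (Set.Icc (0:ℝ) 1)), f q = f' q)) := by
  constructor
  · constructor
    · rintro ⟨f, hf⟩
      calc ∫⁻ r in Set.Icc (0:ℝ) (1/4),
              ENNReal.ofReal (|g r| * (Real.sqrt (1 - 4*r))⁻¹)
          ≤ ∫⁻ r in Icc (0:ℝ) (1/4), ENNReal.ofReal (Real.sqrt (1-4*r))⁻¹ *
              (ENNReal.ofReal (f (qPlus r)) + ENNReal.ofReal (f (qMinus r))) :=
            lintegral_mono_ae (realizes_ae_le hf)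
        _ = 1 := realizes_eq_one hf
    · exact exists_realizes hg
  · intro hI f hf
    refine ⟨sat_branch hg hI hf, ?_⟩
    intro f' hf'
    have b1 := sat_branch hg hI hf
    have b2 := sat_branch hg hI hf'
    set D : ℝ → ℝ≥0∞ := fun q => if f q = f' q then 0 else 1 with hD
    have hDm : Measurable D :=
      Measurable.ite (measurableSet_eq_fun hf.1 hf'.1) measurable_const measurable_const
    have hzero : ∫⁻ q in Set.Icc (0:ℝ) 1, D q = 0 := by
      rw [lemmaA D hDm]
      have hc : (fun r => ENNReal.ofReal (Real.sqrt (1-4*r))⁻¹ * (D (qPlus r) + D (qMinus r)))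
          =ᵐ[volume.restrict (Set.Icc (0:ℝ) (1/4))] 0 := by
        filter_upwards [b1, b2] with r h1 h2
        have e1 : D (qPlus r) = 0 := if_pos (by rw [h1.1, h2.1])
        have e2 : D (qMinus r) = 0 := if_pos (by rw [h1.2, h2.2])
        simp [e1, e2]
      rw [lintegral_congr_ae hc]; simp
    have hD0 := (lintegral_eq_zero_iff hDm).1 hzero
    filter_upwards [hD0] with q hq
    by_contra hne
    simp only [hD, if_neg hne] at hq
    exact one_ne_zero hq
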